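/- Fix $k < n$ and let $G = (\mathbb{Z}/2\mathbb{Z})^{\{0,1\}^n}$. For any $g \in G$ and any partition $G = \bigcup_{j=1}^k A_j$, there exist $j \leq k$ and $a \neq b \in A_j$ such that $a - b \in g + U(n, 3k+3)$, where $U(n,m)$ is the Hamming ball of radius $m$ around $0$. -/

import Mathlib

namespace Stmt3Aux

/-- sign predicate -/
def sgn (ε : Bool) (a : ℤ) : Prop := if ε then 0 < a else a < 0

lemma sgn_neg {ε : Bool} {a : ℤ} (h : sgn ε a) : sgn (!ε) (-a) := by
  cases ε <;> simp [sgn] at * <;> omega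

lemma sgn_ne_zero {ε : Bool} {a : ℤ} (h : sgn ε a) : a ≠ 0 := by
  cases ε <;> simp [sgn] at * <;> omega

lemma sgn_unique {ε ε' : Bool} {a : ℤ} (h : sgn ε a) (h' : sgn ε' a) : ε = ε' := by
  cases ε <;> cases ε' <;> simp [sgn] at * <;> omega

lemma sgn_of_ne {a : ℤ} (h : a ≠ 0) : sgn true a ∨ sgn false a := by
  simp [sgn]; omega

/-- alternating list of labels: signs alternate starting with ε, absolute values
strictly increasing -/
def AltL : Bool → List ℤ → Prop
  | _, [] => True
  | ε, a :: l => sgn ε a ∧ (∀ b ∈ l, |a| < |b|) ∧ AltL (!ε) l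

@[simp] lemma altL_nil (ε : Bool) : AltL ε [] := trivial

@[simp] lemma altL_cons {ε : Bool} {a : ℤ} {l : List ℤ} :
    AltL ε (a :: l) ↔ sgn ε a ∧ (∀ b ∈ l, |a| < |b|) ∧ AltL (!ε) l := Iff.rfl

/-- alternating multiset -/
def AltM (ε : Bool) (M : Multiset ℤ) : Prop := ∃ l : List ℤ, AltL ε l ∧ M = ↑l

@[simp] lemma altM_zero (ε : Bool) : AltM ε 0 := ⟨[], trivial, rfl⟩

lemma altL_neg {ε : Bool} {l : List ℤ} (h : AltL ε l) : AltL (!ε) (l.map (fun x => -x)) := by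
  induction l generalizing ε with
  | nil => simp
  | cons a l ih =>
    obtain ⟨h1, h2, h3⟩ := h
    refine ⟨sgn_neg h1, ?_, ih h3⟩
    intro b hb
    simp only [List.mem_map] at hb
    obtain ⟨c, hc, rfl⟩ := hb
    simpa using h2 c hc

lemma altM_neg {ε : Bool} {M : Multiset ℤ} (h : AltM ε M) :
    AltM (!ε) (M.map (fun x => -x)) := by
  obtain ⟨l, hl, rfl⟩ := h
  exact ⟨l.map (fun x => -x), altL_neg hl, by simp⟩

lemma altM_neg_iff {ε : Bool} {M : Multiset ℤ} :
    AltM (!ε) (M.map (fun x => -x)) ↔ AltM ε M := by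
  constructor
  · intro h
    have := altM_neg h
    simpa [Multiset.map_map, Function.comp] using this
  · exact altM_neg

/-- the head of an alternating list has strictly minimal absolute value, so it's
determined -/
lemma altM_cons_iff {ε : Bool} {a : ℤ} {M : Multiset ℤ}
    (ha : a ≠ 0) (hmin : ∀ b ∈ M, |a| < |b|) :
    AltM ε (a ::ₘ M) ↔ sgn ε a ∧ AltM (!ε) M := by
  constructor
  · rintro ⟨l, hl, hMl⟩
    cases l with
    | nil => simp at hMl
    | cons x l' =>
      obtain ⟨hs, hlt, hl'⟩ := hl
      have hx : x = a := by
        by_contra hxa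
        have hxM : x ∈ a ::ₘ M := by rw [hMl]; simp
        have haM : a ∈ x ::ₘ (l' : Multiset ℤ) := by
          rw [Multiset.cons_coe, ← hMl]; simp
        rcases Multiset.mem_cons.1 hxM with h | h
        · exact hxa h
        · have h1 : |a| < |x| := hmin x h
          have h2 : a ∈ l' := by
            rcases Multiset.mem_cons.1 haM with h' | h'
            · exact absurd h'.symm hxa
            · simpa using h'
          have := hlt a h2
          omega
      have hM : M = ↑l' := by
        have h2 : a ::ₘ M = a ::ₘ (l' : Multiset ℤ) := by
          rw [Multiset.cons_coe]; rw [hx] at hMl; exact hMl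
        exact (Multiset.cons_inj_right a).1 h2
      exact ⟨hx ▸ hs, ⟨l', hl', hM⟩⟩
  · rintro ⟨hs, l, hl, rfl⟩
    refine ⟨a :: l, ⟨hs, ?_, hl⟩, by simp [Multiset.cons_coe]⟩
    intro b hb
    exact hmin b (by simpa using hb)

lemma altL_abs_pairwise {ε : Bool} {l : List ℤ} (h : AltL ε l) :
    l.Pairwise (fun a b => |a| < |b|) := by
  induction l generalizing ε with
  | nil => simp
  | cons a l ih =>
    obtain ⟨_, h2, h3⟩ := h
    exact List.pairwise_cons.2 ⟨h2, ih h3⟩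

lemma altM_nodup {ε : Bool} {M : Multiset ℤ} (h : AltM ε M) : M.Nodup := by
  obtain ⟨l, hl, rfl⟩ := h
  have hp := altL_abs_pairwise hl
  refine Multiset.coe_nodup.2 (List.Pairwise.imp ?_ hp)
  intro a b hab heq
  rw [heq] at hab
  omega

/-- a multiset with a repeated entry is not alternating -/
lemma not_altM_of_two {ε : Bool} {a : ℤ} {M : Multiset ℤ} (h : 2 ≤ M.count a) :
    ¬ AltM ε M := by
  intro hM
  have := Multiset.nodup_iff_count_le_one.1 (altM_nodup hM) a
  omega


open scoped Classical in
/-- indicator of a proposition in `ZMod 2` -/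
noncomputable def ind (P : Prop) : ZMod 2 := if P then 1 else 0

lemma ind_of {P : Prop} (h : P) : ind P = 1 := if_pos h
lemma ind_of_not {P : Prop} (h : ¬ P) : ind P = 0 := if_neg h
lemma ind_congr {P Q : Prop} (h : P ↔ Q) : ind P = ind Q := by
  by_cases hP : P
  · rw [ind_of hP, ind_of (h.1 hP)]
  · rw [ind_of_not hP, ind_of_not (fun hq => hP (h.2 hq))]
lemma ind_and (P Q : Prop) : ind (P ∧ Q) = ind P * ind Q := by
  by_cases hP : P <;> by_cases hQ : Q
  · rw [ind_of (⟨hP, hQ⟩ : P ∧ Q), ind_of hP, ind_of hQ]; ring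
  · rw [ind_of_not (by tauto), ind_of_not hQ]; ring
  · rw [ind_of_not (by tauto), ind_of_not hP]; ring
  · rw [ind_of_not (by tauto), ind_of_not hP]; ring

lemma zmod2_add_self (x : ZMod 2) : x + x = 0 := by
  fin_cases x <;> decide


lemma sum_erase_alt : ∀ (n : ℕ) (M : Multiset ℤ), M.card = n → M ≠ 0 →
    (∀ x ∈ M, ∀ y ∈ M, x + y ≠ 0) →
    (M.map (fun x => ind (AltM true (M.erase x)))).sum
      = ind (AltM true M) + ind (AltM false M) := by
  intro n
  induction n using Nat.strong_induction_on with
  | _ n IH =>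
  intro M hcard hM0 hno
  have hne : M.toFinset.Nonempty := by
    rw [Multiset.toFinset_nonempty]; exact hM0
  obtain ⟨a, haF, hamin⟩ := M.toFinset.exists_min_image (fun x => |x|) hne
  rw [Multiset.mem_toFinset] at haF
  have hmin_le : ∀ b ∈ M, |a| ≤ |b| := fun b hb => hamin b (Multiset.mem_toFinset.2 hb)
  have ha0 : a ≠ 0 := fun h => hno a haF a haF (by rw [h]; ring)
  by_cases hm0 : 2 ≤ M.count a
  · -- repeated minimum: everything vanishes
    have hA : ∀ ε, ¬ AltM ε M := fun ε => not_altM_of_two hm0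
    rw [ind_of_not (hA true), ind_of_not (hA false)]
    obtain ⟨t, ht⟩ := Multiset.exists_cons_of_mem haF
    have hat : a ∈ t := by
      rw [ht, Multiset.count_cons_self] at hm0
      exact Multiset.count_pos.1 (by omega)
    obtain ⟨K, hK⟩ := Multiset.exists_cons_of_mem hat
    have hMK : M = a ::ₘ a ::ₘ K := by rw [ht, hK]
    have hcnt : M.count a = 2 + K.count a := by
      rw [hMK, Multiset.count_cons_self, Multiset.count_cons_self]; ring
    have hterm : ∀ x ∈ K, ind (AltM true (M.erase x)) = 0 := by
      intro x hx
      refine ind_of_not (not_altM_of_two (a := a) ?_)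
      by_cases hxa : x = a
      · subst hxa
        rw [Multiset.count_erase_self]
        have : 1 ≤ K.count x := Multiset.count_pos.2 hx
        omega
      · rw [Multiset.count_erase_of_ne (fun h => hxa h.symm)]
        omega
    set φ : ℤ → ZMod 2 := fun x => ind (AltM true (M.erase x)) with hφ
    rw [hMK, Multiset.map_cons, Multiset.map_cons, Multiset.sum_cons, Multiset.sum_cons,
      ← add_assoc, zmod2_add_self, zero_add]
    refine Multiset.sum_eq_zero ?_
    intro y hy
    rw [Multiset.mem_map] at hy
    obtain ⟨x, hx, rfl⟩ := hy
    exact hterm x hx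
  · -- the minimum has multiplicity one
    have hm1 : M.count a = 1 := by
      have : 1 ≤ M.count a := Multiset.count_pos.2 haF
      omega
    have hstrict : ∀ b ∈ M.erase a, |a| < |b| := by
      intro b hb
      have hbM : b ∈ M := Multiset.mem_of_mem_erase hb
      rcases lt_or_eq_of_le (hmin_le b hbM) with h | h
      · exact h
      · exfalso
        have hb' : b = a ∨ b = -a := by
          rcases abs_eq_abs.1 h.symm with h' | h'
          · left; omega
          · right; omega
        rcases hb' with rfl | rfl
        · have h1 : Multiset.count b (M.erase b) = 0 := by
            rw [Multiset.count_erase_self, hm1]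
          exact absurd (Multiset.count_pos.2 hb) (by omega)
        · exact hno a haF (-a) hbM (by ring)
    have hMeq : M = a ::ₘ M.erase a := (Multiset.cons_erase haF).symm
    -- the inner sum over M.erase a
    have hsplit : ∀ x ∈ M.erase a, M.erase x = a ::ₘ ((M.erase a).erase x) := by
      intro x hx
      have hxa : x ≠ a := by
        intro h; subst h
        have h1 : Multiset.count x (M.erase x) = 0 := by
          rw [Multiset.count_erase_self, hm1]
        exact absurd (Multiset.count_pos.2 hx) (by omega)
      have haex : a ∈ M.erase x := by
        rw [← Multiset.count_pos, Multiset.count_erase_of_ne (fun h => hxa h.symm), hm1]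
        omega
      rw [← Multiset.cons_erase haex, Multiset.erase_comm]
    have hterm : ∀ x ∈ M.erase a, ind (AltM true (M.erase x))
        = ind (sgn true a) * ind (AltM false ((M.erase a).erase x)) := by
      intro x hx
      rw [← ind_and]
      refine ind_congr ?_
      rw [hsplit x hx]
      have : ∀ b ∈ (M.erase a).erase x, |a| < |b| := fun b hb =>
        hstrict b (Multiset.mem_of_mem_erase hb)
      exact (altM_cons_iff ha0 this).trans (by rw [show (!true) = false from rfl])
    -- apply IH to the negation of M.erase a
    have hcard' : (M.erase a).card = n - 1 := by
      rw [Multiset.card_erase_of_mem haF, hcard, Nat.pred_eq_sub_one]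
    have hn1 : 1 ≤ n := by
      rw [← hcard]
      refine Multiset.card_pos.2 hM0
    by_cases hn : n = 1
    · -- base case : M = {a}
      have hM'0 : M.erase a = 0 := by
        rw [← Multiset.card_eq_zero, hcard', hn]
      have hMa : M = {a} := by rw [hMeq, hM'0]; rfl
      rw [hMa]
      have h1 : ({a} : Multiset ℤ).erase a = 0 := by simp
      rw [Multiset.map_singleton, Multiset.sum_singleton, h1, ind_of (altM_zero true)]
      have h2 : ∀ ε, AltM ε ({a} : Multiset ℤ) ↔ sgn ε a := by
        intro ε
        have := altM_cons_iff (ε := ε) ha0 (M := 0) (by simp)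
        simp only [Multiset.cons_zero] at this
        rw [this]
        simp [altM_zero]
      rw [ind_congr (h2 true), ind_congr (h2 false)]
      rcases sgn_of_ne ha0 with h | h
      · rw [ind_of h, ind_of_not (show ¬ sgn false a from fun h' => by
          have := sgn_unique h h'; simp at this)]
        ring
      · rw [ind_of h, ind_of_not (show ¬ sgn true a from fun h' => by
          have := sgn_unique h h'; simp at this)]
        ring
    · -- inductive case
      have hM'0 : M.erase a ≠ 0 := by
        rw [← Multiset.card_pos, hcard']
        omega
      have hinj : Function.Injective (fun x : ℤ => -x) := fun u v h => by
        simpa using h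
      have hIH := IH (n-1) (by omega) ((M.erase a).map (fun x => -x))
        (by rw [Multiset.card_map, hcard']) (by simpa using hM'0)
        (by
          intro x hx y hy
          rw [Multiset.mem_map] at hx hy
          obtain ⟨x', hx', rfl⟩ := hx
          obtain ⟨y', hy', rfl⟩ := hy
          intro h
          exact hno y' (Multiset.mem_of_mem_erase hy') x' (Multiset.mem_of_mem_erase hx')
            (by linarith))
      -- rewrite IH as a statement about M.erase a
      have hFneg : ((M.erase a).map (fun x => ind (AltM false ((M.erase a).erase x)))).sum
          = ind (AltM true (M.erase a)) + ind (AltM false (M.erase a)) := by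
        rw [Multiset.map_map] at hIH
        have hcong : Multiset.map ((fun x => ind (AltM true ((Multiset.map (fun x => -x) (M.erase a)).erase x))) ∘ (fun x => -x)) (M.erase a)
            = Multiset.map (fun x => ind (AltM false ((M.erase a).erase x))) (M.erase a) := by
          refine Multiset.map_congr rfl ?_
          intro x hx
          simp only [Function.comp]
          have hmap : (Multiset.map (fun x : ℤ => -x) (M.erase a)).erase (-x)
              = Multiset.map (fun x : ℤ => -x) ((M.erase a).erase x) :=
            (Multiset.map_erase _ hinj x (M.erase a)).symm
          rw [hmap]
          refine ind_congr ?_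
          have := altM_neg_iff (ε := false) (M := (M.erase a).erase x)
          simpa using this
        rw [hcong] at hIH
        rw [hIH]
        have e1 : AltM true ((M.erase a).map (fun x => -x)) ↔ AltM false (M.erase a) := by
          have := altM_neg_iff (ε := false) (M := M.erase a); simpa using this
        have e2 : AltM false ((M.erase a).map (fun x => -x)) ↔ AltM true (M.erase a) := by
          have := altM_neg_iff (ε := true) (M := M.erase a); simpa using this
        rw [ind_congr e1, ind_congr e2, add_comm]
      -- put everything together
      set φ : ℤ → ZMod 2 := fun x => ind (AltM true (M.erase x)) with hφ
      have hLHS : (M.map φ).sum = φ a + ((M.erase a).map φ).sum := by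
        conv_lhs => rw [hMeq]
        rw [Multiset.map_cons, Multiset.sum_cons]
      have hmid : ((M.erase a).map φ).sum
          = ind (sgn true a) * (ind (AltM true (M.erase a)) + ind (AltM false (M.erase a))) := by
        have h1 : Multiset.map φ (M.erase a)
            = Multiset.map (fun x => ind (sgn true a) * ind (AltM false ((M.erase a).erase x))) (M.erase a) := by
          refine Multiset.map_congr rfl ?_
          intro x hx
          exact hterm x hx
        rw [h1, Multiset.sum_map_mul_left, hFneg]
      rw [hLHS, hmid]
      have hphia : φ a = ind (AltM true (M.erase a)) := rfl
      rw [hphia]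
      have hRHS : ind (AltM true M) + ind (AltM false M)
          = ind (sgn true a) * ind (AltM false (M.erase a))
            + ind (sgn false a) * ind (AltM true (M.erase a)) := by
        have e1 : AltM true M ↔ sgn true a ∧ AltM false (M.erase a) := by
          conv_lhs => rw [hMeq]
          exact (altM_cons_iff ha0 hstrict).trans (by rw [show (!true) = false from rfl])
        have e2 : AltM false M ↔ sgn false a ∧ AltM true (M.erase a) := by
          conv_lhs => rw [hMeq]
          exact (altM_cons_iff ha0 hstrict).trans (by rw [show (!false) = true from rfl])
        rw [ind_congr e1, ind_congr e2, ind_and, ind_and]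
      rw [hRHS]
      rcases sgn_of_ne ha0 with h | h
      · rw [ind_of h, ind_of_not (show ¬ sgn false a from fun h' => by
          have := sgn_unique h h'; simp at this)]
        rw [one_mul, one_mul, zero_mul, add_zero, ← add_assoc, zmod2_add_self, zero_add]
      · rw [ind_of h, ind_of_not (show ¬ sgn true a from fun h' => by
          have := sgn_unique h h'; simp at this)]
        ring

section Machinery

variable {m : ℕ} (lab : Finset (Fin m) → Finset (Fin m) → ℤ)

/-- the signed set formed by the letters of `f` at positions `≥ q`, on side `s` -/
def SS {L : ℕ} (f : Fin L → Fin m × Bool) (q : Fin L) (s : Bool) : Finset (Fin m) :=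
  (Finset.univ.filter (fun i => q ≤ i ∧ (f i).2 = s)).image (fun i => (f i).1)

def lb {L : ℕ} (f : Fin L → Fin m × Bool) (q : Fin L) : ℤ :=
  lab (SS f q true) (SS f q false)

/-- the multiset of labels along the chain of `f` -/
def Mch {L : ℕ} (f : Fin L → Fin m × Bool) : Multiset ℤ :=
  Multiset.map (lb lab f) Finset.univ.val

/-- the deleted multiset of labels (position `t` removed) -/
def Mdel {L : ℕ} (f : Fin L → Fin m × Bool) (t : Fin L) : Multiset ℤ :=
  Multiset.map (lb lab f) (Finset.univ.erase t).val

def GoodT {L : ℕ} (f : Fin L → Fin m × Bool) : Prop :=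
  Function.Injective (fun i => (f i).1) ∧ ∀ i, ((f i).1 : ℕ) < L

def PosT {L : ℕ} (f : Fin L → Fin m × Bool) : Prop :=
  ∀ i, ((f i).1 : ℕ) = L - 1 → (f i).2 = true

noncomputable def beta (L : ℕ) : ZMod 2 :=
  ∑ f : Fin L → Fin m × Bool, ind (GoodT f) * ind (AltM true (Mch lab f))

lemma mem_SS {L : ℕ} {f : Fin L → Fin m × Bool} {q : Fin L} {s : Bool} {x : Fin m} :
    x ∈ SS f q s ↔ ∃ i, q ≤ i ∧ (f i).2 = s ∧ (f i).1 = x := by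
  simp only [SS, Finset.mem_image, Finset.mem_filter, Finset.mem_univ, true_and]
  constructor
  · rintro ⟨i, ⟨h1, h2⟩, h3⟩; exact ⟨i, h1, h2, h3⟩
  · rintro ⟨i, h1, h2, h3⟩; exact ⟨i, ⟨h1, h2⟩, h3⟩

lemma SS_disjoint {L : ℕ} {f : Fin L → Fin m × Bool}
    (hf : Function.Injective (fun i => (f i).1)) (q : Fin L) :
    Disjoint (SS f q true) (SS f q false) := by
  rw [Finset.disjoint_left]
  intro x hxt hxf
  obtain ⟨i, _, hi2, hi3⟩ := mem_SS.1 hxt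
  obtain ⟨j, _, hj2, hj3⟩ := mem_SS.1 hxf
  have : i = j := hf (show (f i).1 = (f j).1 by rw [hi3, hj3])
  rw [this] at hi2
  rw [hi2] at hj2
  exact Bool.noConfusion hj2

lemma SS_union_nonempty {L : ℕ} (f : Fin L → Fin m × Bool) (q : Fin L) :
    ((SS f q true) ∪ (SS f q false)).Nonempty := by
  refine ⟨(f q).1, ?_⟩
  rw [Finset.mem_union]
  by_cases h : (f q).2 = true
  · exact Or.inl (mem_SS.2 ⟨q, le_refl q, h, rfl⟩)
  · exact Or.inr (mem_SS.2 ⟨q, le_refl q, by simpa using h, rfl⟩)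

lemma SS_mono {L : ℕ} (f : Fin L → Fin m × Bool) {q q' : Fin L} (h : q ≤ q') (s : Bool) :
    SS f q' s ⊆ SS f q s := by
  intro x hx
  obtain ⟨i, h1, h2, h3⟩ := mem_SS.1 hx
  exact mem_SS.2 ⟨i, le_trans h h1, h2, h3⟩

end Machinery

section Machinery2

variable {m N : ℕ} {lab : Finset (Fin m) → Finset (Fin m) → ℤ}

/-- hypotheses on the labelling -/
structure LabHyp (m N : ℕ) (lab : Finset (Fin m) → Finset (Fin m) → ℤ) : Prop where
  anti : ∀ A B : Finset (Fin m), Disjoint A B → (A ∪ B).Nonempty → lab B A = - lab A B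
  nocomp : ∀ A B A' B' : Finset (Fin m), Disjoint A B → (A ∪ B).Nonempty →
    Disjoint A' B' → (A' ∪ B').Nonempty → A ⊆ A' → B ⊆ B' → lab A' B' + lab A B ≠ 0
  bound : ∀ A B : Finset (Fin m), Disjoint A B → (A ∪ B).Nonempty → |lab A B| ≤ (N : ℤ)

lemma chain_no_opp (H : LabHyp m N lab) {L : ℕ} {f : Fin L → Fin m × Bool}
    (hf : Function.Injective (fun i => (f i).1)) :
    ∀ x ∈ Mch lab f, ∀ y ∈ Mch lab f, x + y ≠ 0 := by
  have key : ∀ q q' : Fin L, q ≤ q' → lb lab f q + lb lab f q' ≠ 0 := by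
    intro q q' hqq'
    exact H.nocomp (SS f q' true) (SS f q' false) (SS f q true) (SS f q false)
      (SS_disjoint hf q') (SS_union_nonempty f q') (SS_disjoint hf q) (SS_union_nonempty f q)
      (SS_mono f hqq' true) (SS_mono f hqq' false)
  intro x hx y hy
  rw [Mch, Multiset.mem_map] at hx hy
  obtain ⟨q, _, rfl⟩ := hx
  obtain ⟨q', _, rfl⟩ := hy
  rcases le_total q q' with h | h
  · intro hc
    exact key q q' h (by linarith)
  · intro hc
    exact key q' q h (by linarith)

lemma Mch_card {L : ℕ} (f : Fin L → Fin m × Bool) : (Mch lab f).card = L := by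
  rw [Mch, Multiset.card_map]
  simp

lemma Mch_erase {L : ℕ} (f : Fin L → Fin m × Bool) (t : Fin L) :
    (Mch lab f).erase (lb lab f t) = Mdel lab f t := by
  have h1 : (Finset.univ : Finset (Fin L)).val = t ::ₘ ((Finset.univ : Finset (Fin L)).erase t).val := by
    rw [Finset.erase_val]
    exact (Multiset.cons_erase (by simp : t ∈ (Finset.univ : Finset (Fin L)).val)).symm
  rw [Mch, Mdel, h1, Multiset.map_cons, Multiset.erase_cons_head]

/-- per-chain parity: follows from `sum_erase_alt` -/
lemma chain_parity (H : LabHyp m N lab) {L : ℕ} (hL : 1 ≤ L) {f : Fin L → Fin m × Bool}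
    (hf : Function.Injective (fun i => (f i).1)) :
    ∑ t : Fin L, ind (AltM true (Mdel lab f t))
      = ind (AltM true (Mch lab f)) + ind (AltM false (Mch lab f)) := by
  have h0 : Mch lab f ≠ 0 := by
    intro h
    have := Mch_card (lab := lab) f
    rw [h] at this
    simp at this
    omega
  have hse := sum_erase_alt (Mch lab f).card (Mch lab f) rfl h0 (chain_no_opp H hf)
  rw [← hse, Mch, Multiset.map_map]
  rw [Finset.sum]
  refine congrArg Multiset.sum (Multiset.map_congr rfl ?_)
  intro t _
  simp only [Function.comp]
  rw [show Multiset.map (lb lab f) Finset.univ.val = Mch lab f from rfl, Mch_erase]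

end Machinery2

section Machinery3

variable {m N : ℕ} {lab : Finset (Fin m) → Finset (Fin m) → ℤ}

/-- the range finset `{x : Fin m | x.val < K}` -/
def Rng (m K : ℕ) (h : K ≤ m) : Finset (Fin m) :=
  Finset.univ.map (Fin.castLEEmb h)

lemma mem_Rng {K : ℕ} (h : K ≤ m) {x : Fin m} : x ∈ Rng m K h ↔ (x : ℕ) < K := by
  simp only [Rng, Finset.mem_map, Finset.mem_univ, true_and]
  constructor
  · rintro ⟨y, rfl⟩
    exact y.2
  · intro hx
    exact ⟨⟨x.1, hx⟩, by ext; simp⟩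

lemma card_Rng {K : ℕ} (h : K ≤ m) : (Rng m K h).card = K := by
  simp [Rng]

/-- for a good tuple, the image of the letters is all of `Rng` -/
lemma image_eq_Rng {L : ℕ} (hLm : L ≤ m) {f : Fin L → Fin m × Bool} (hf : GoodT f) :
    Finset.univ.image (fun i => (f i).1) = Rng m L hLm := by
  refine Finset.eq_of_subset_of_card_le ?_ ?_
  · intro x hx
    rw [Finset.mem_image] at hx
    obtain ⟨i, _, rfl⟩ := hx
    exact (mem_Rng hLm).2 (hf.2 i)
  · rw [card_Rng, Finset.card_image_of_injective _ hf.1]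
    simp

lemma exists_letter {L : ℕ} (hLm : L ≤ m) {f : Fin L → Fin m × Bool} (hf : GoodT f)
    {v : Fin m} (hv : (v : ℕ) < L) : ∃ i, (f i).1 = v := by
  have : v ∈ Finset.univ.image (fun i => (f i).1) := by
    rw [image_eq_Rng hLm hf, mem_Rng]
    exact hv
  rw [Finset.mem_image] at this
  obtain ⟨i, _, h⟩ := this
  exact ⟨i, h⟩

/-- flip all signs -/
def nu {L : ℕ} (f : Fin L → Fin m × Bool) : Fin L → Fin m × Bool :=
  fun i => ((f i).1, !(f i).2)

lemma nu_nu {L : ℕ} (f : Fin L → Fin m × Bool) : nu (nu f) = f := by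
  funext i
  simp [nu]

lemma goodT_nu {L : ℕ} {f : Fin L → Fin m × Bool} : GoodT (nu f) ↔ GoodT f := Iff.rfl

lemma SS_nu {L : ℕ} (f : Fin L → Fin m × Bool) (q : Fin L) (s : Bool) :
    SS (nu f) q s = SS f q (!s) := by
  ext x
  rw [mem_SS, mem_SS]
  constructor
  · rintro ⟨i, h1, h2, h3⟩
    exact ⟨i, h1, by simp [nu] at h2; rw [← h2], h3⟩
  · rintro ⟨i, h1, h2, h3⟩
    exact ⟨i, h1, by simp [nu]; rw [h2], h3⟩

lemma lb_nu (H : LabHyp m N lab) {L : ℕ} {f : Fin L → Fin m × Bool}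
    (hf : Function.Injective (fun i => (f i).1)) (q : Fin L) :
    lb lab (nu f) q = - lb lab f q := by
  rw [lb, lb, SS_nu, SS_nu]
  show lab (SS f q false) (SS f q true) = _
  exact H.anti (SS f q true) (SS f q false) (SS_disjoint hf q) (SS_union_nonempty f q)

lemma Mch_nu (H : LabHyp m N lab) {L : ℕ} {f : Fin L → Fin m × Bool}
    (hf : Function.Injective (fun i => (f i).1)) :
    Mch lab (nu f) = (Mch lab f).map (fun x => -x) := by
  rw [Mch, Mch, Multiset.map_map]
  refine Multiset.map_congr rfl ?_
  intro q _
  simp only [Function.comp]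
  exact lb_nu H hf q

end Machinery3

section Machinery4

variable {m N : ℕ} {lab : Finset (Fin m) → Finset (Fin m) → ℤ}

lemma posT_nu {L : ℕ} (hLm : L + 1 ≤ m) {f : Fin (L+1) → Fin m × Bool} (hG : GoodT f) :
    PosT (nu f) ↔ ¬ PosT f := by
  obtain ⟨i₀, hi₀⟩ := exists_letter hLm hG (v := ⟨L, by omega⟩) (by simp)
  have hval : ((f i₀).1 : ℕ) = L + 1 - 1 := by rw [hi₀]; simp
  constructor
  · intro hnu hP
    have h1 := hP i₀ hval
    have h2 := hnu i₀ (by simpa [nu] using hval)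
    rw [nu] at h2
    simp only at h2
    rw [h1] at h2
    exact Bool.noConfusion h2
  · intro hP i hi
    simp only [nu] at hi ⊢
    have hne : ¬ ∀ i, ((f i).1 : ℕ) = L + 1 - 1 → (f i).2 = true := hP
    push_neg at hne
    obtain ⟨j, hj1, hj2⟩ := hne
    have hij : i = j := by
      apply hG.1
      show (f i).1 = (f j).1
      ext
      rw [hi, hj1]
    rw [hij]
    simp only [Bool.not_eq_true] at hj2
    rw [hj2]
    rfl

lemma ind_split (P Q : Prop) : ind Q = ind (Q ∧ P) + ind (Q ∧ ¬ P) := by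
  by_cases hQ : Q <;> by_cases hP : P
  · rw [ind_of hQ, ind_of ⟨hQ, hP⟩, ind_of_not (by tauto)]; ring
  · rw [ind_of hQ, ind_of_not (by tauto), ind_of ⟨hQ, hP⟩]; ring
  · rw [ind_of_not hQ, ind_of_not (by tauto), ind_of_not (by tauto)]; ring
  · rw [ind_of_not hQ, ind_of_not (by tauto), ind_of_not (by tauto)]; ring

/-- Part (I) of the inductive step -/
lemma step_I (H : LabHyp m N lab) {L : ℕ} (hLm : L + 1 ≤ m) :
    beta lab (L+1) = ∑ f : Fin (L+1) → Fin m × Bool,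
      ind (GoodT f ∧ PosT f)
        * (ind (AltM true (Mch lab f)) + ind (AltM false (Mch lab f))) := by
  rw [beta]
  have hsplit : ∀ f : Fin (L+1) → Fin m × Bool,
      ind (GoodT f) * ind (AltM true (Mch lab f))
      = ind (GoodT f ∧ PosT f) * ind (AltM true (Mch lab f))
        + ind (GoodT f ∧ ¬ PosT f) * ind (AltM true (Mch lab f)) := by
    intro f
    rw [← add_mul, ← ind_split]
  rw [Finset.sum_congr rfl (fun f _ => hsplit f), Finset.sum_add_distrib]
  have h2 : (∑ f : Fin (L+1) → Fin m × Bool,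
        ind (GoodT f ∧ ¬ PosT f) * ind (AltM true (Mch lab f)))
      = ∑ f : Fin (L+1) → Fin m × Bool,
        ind (GoodT f ∧ PosT f) * ind (AltM false (Mch lab f)) := by
    refine Fintype.sum_equiv ⟨nu, nu, fun f => nu_nu f, fun f => nu_nu f⟩ _ _ ?_
    intro f
    show ind (GoodT f ∧ ¬ PosT f) * ind (AltM true (Mch lab f))
      = ind (GoodT (nu f) ∧ PosT (nu f)) * ind (AltM false (Mch lab (nu f)))
    by_cases hG : GoodT f
    · have e1 : (GoodT (nu f) ∧ PosT (nu f)) ↔ (GoodT f ∧ ¬ PosT f) := by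
        rw [goodT_nu]
        exact and_congr Iff.rfl (posT_nu hLm hG)
      have e2 : AltM false (Mch lab (nu f)) ↔ AltM true (Mch lab f) := by
        rw [Mch_nu H hG.1]
        have := altM_neg_iff (ε := true) (M := Mch lab f)
        simpa using this
      rw [ind_congr e1, ind_congr e2]
    · rw [ind_of_not (show ¬(GoodT f ∧ ¬ PosT f) from fun h => hG h.1),
        ind_of_not (show ¬(GoodT (nu f) ∧ PosT (nu f)) from fun h => hG (goodT_nu.1 h.1))]
      ring
  rw [h2, ← Finset.sum_add_distrib]
  refine Finset.sum_congr rfl ?_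
  intro f _
  ring

lemma swap_le_iff {L : ℕ} (t : Fin L) {q : Fin (L+1)} (hq : q ≠ t.succ) (i : Fin (L+1)) :
    q ≤ (Equiv.swap t.castSucc t.succ) i ↔ q ≤ i := by
  have hqv : (q : ℕ) ≠ (t : ℕ) + 1 := by
    intro h
    exact hq (by ext; simpa using h)
  by_cases h1 : i = t.castSucc
  · rw [h1, Equiv.swap_apply_left]
    simp only [Fin.le_def, Fin.val_succ, Fin.coe_castSucc]
    omega
  · by_cases h2 : i = t.succ
    · rw [h2, Equiv.swap_apply_right]
      simp only [Fin.le_def, Fin.val_succ, Fin.coe_castSucc]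
      omega
    · rw [Equiv.swap_apply_of_ne_of_ne h1 h2]

lemma SS_swap {L : ℕ} (f : Fin (L+1) → Fin m × Bool) (t : Fin L) {q : Fin (L+1)}
    (hq : q ≠ t.succ) (s : Bool) :
    SS (f ∘ (Equiv.swap t.castSucc t.succ)) q s = SS f q s := by
  set e := Equiv.swap t.castSucc t.succ with he
  ext x
  rw [mem_SS, mem_SS]
  constructor
  · rintro ⟨i, h1, h2, h3⟩
    exact ⟨e i, (swap_le_iff t hq i).2 h1, h2, h3⟩
  · rintro ⟨j, h1, h2, h3⟩
    refine ⟨e j, ?_, ?_, ?_⟩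
    · exact (swap_le_iff t hq j).2 h1
    · show (f (e (e j))).2 = s
      rw [Equiv.swap_apply_self]
      exact h2
    · show (f (e (e j))).1 = x
      rw [Equiv.swap_apply_self]
      exact h3

lemma Mdel_swap {L : ℕ} (f : Fin (L+1) → Fin m × Bool) (t : Fin L) :
    Mdel lab (f ∘ (Equiv.swap t.castSucc t.succ)) t.succ = Mdel lab f t.succ := by
  rw [Mdel, Mdel]
  refine Multiset.map_congr rfl ?_
  intro q hq
  have hq' : q ≠ t.succ := by
    rw [Finset.mem_val, Finset.mem_erase] at hq
    exact hq.1
  rw [lb, lb, SS_swap f t hq', SS_swap f t hq']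

lemma goodT_comp {L : ℕ} (f : Fin L → Fin m × Bool) (e : Equiv.Perm (Fin L)) :
    GoodT (f ∘ e) ↔ GoodT f := by
  constructor
  · rintro ⟨h1, h2⟩
    constructor
    · intro i j hij
      have := h1 (a₁ := e.symm i) (a₂ := e.symm j)
        (by show (f (e (e.symm i))).1 = (f (e (e.symm j))).1; rw [e.apply_symm_apply, e.apply_symm_apply]; exact hij)
      have h3 : e (e.symm i) = e (e.symm j) := congrArg e this
      rwa [e.apply_symm_apply, e.apply_symm_apply] at h3
    · intro i
      have h3 := h2 (e.symm i)
      simp only [Function.comp_apply] at h3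
      rwa [e.apply_symm_apply] at h3
  · rintro ⟨h1, h2⟩
    exact ⟨fun i j hij => e.injective (h1 hij), fun i => h2 (e i)⟩

lemma posT_comp {L : ℕ} (f : Fin L → Fin m × Bool) (e : Equiv.Perm (Fin L)) :
    PosT (f ∘ e) ↔ PosT f := by
  constructor
  · intro h i hi
    have h4 : ((((f ∘ e) (e.symm i)).1 : ℕ)) = L - 1 := by
      simp only [Function.comp_apply, e.apply_symm_apply]
      exact hi
    have h5 := h (e.symm i) h4
    simp only [Function.comp_apply, e.apply_symm_apply] at h5
    exact h5
  · intro h i hi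
    exact h (e i) hi

/-- the swap-involution kills all terms with `t ≥ 1` -/
lemma step_swap {L : ℕ} :
    (∑ f : Fin (L+1) → Fin m × Bool, ∑ t : Fin L,
      ind (GoodT f ∧ PosT f) * ind (AltM true (Mdel lab f t.succ))) = 0 := by
  rw [← Fintype.sum_prod_type']
  refine Finset.sum_involution
    (fun p _ => (p.1 ∘ (Equiv.swap p.2.castSucc p.2.succ), p.2)) ?_ ?_ ?_ ?_
  · -- sum of paired terms is zero
    rintro ⟨f, t⟩ _
    have h1 : GoodT (f ∘ (Equiv.swap t.castSucc t.succ)) ∧ PosT (f ∘ (Equiv.swap t.castSucc t.succ))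
        ↔ GoodT f ∧ PosT f :=
      and_congr (goodT_comp f _) (posT_comp f _)
    have h2 : Mdel lab (f ∘ (Equiv.swap t.castSucc t.succ)) t.succ = Mdel lab f t.succ :=
      Mdel_swap f t
    show ind (GoodT f ∧ PosT f) * ind (AltM true (Mdel lab f t.succ))
      + ind (_ ∧ _) * ind (AltM true (Mdel lab _ t.succ)) = 0
    rw [h2, ind_congr h1, zmod2_add_self]
  · -- no fixed points on nonzero terms
    rintro ⟨f, t⟩ _ hne
    have hG : GoodT f := by
      by_contra hG
      rw [ind_of_not (show ¬(GoodT f ∧ PosT f) from fun h => hG h.1), zero_mul] at hne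
      exact hne rfl
    intro hc
    have hfc : f ∘ (Equiv.swap t.castSucc t.succ) = f := congrArg Prod.fst hc
    have h3 : f t.succ = f t.castSucc := by
      have := congrFun hfc t.castSucc
      simpa [Equiv.swap_apply_left] using this
    have h4 : t.succ = t.castSucc := hG.1 (show (f t.succ).1 = (f t.castSucc).1 by rw [h3])
    have : (t : ℕ) + 1 = (t : ℕ) := by
      have := congrArg Fin.val h4
      simpa using this
    omega
  · rintro ⟨f, t⟩ _
    exact Finset.mem_univ _
  · rintro ⟨f, t⟩ _
    have : (f ∘ (Equiv.swap t.castSucc t.succ)) ∘ (Equiv.swap t.castSucc t.succ) = f := by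
      funext i
      simp [Function.comp, Equiv.swap_apply_self]
    simp only [this]

lemma SS_cons {L : ℕ} (a : Fin m × Bool) (g : Fin L → Fin m × Bool) (q : Fin L) (s : Bool) :
    SS (Fin.cons a g) q.succ s = SS g q s := by
  ext x
  rw [mem_SS, mem_SS]
  constructor
  · rintro ⟨i, h1, h2, h3⟩
    have hi0 : i ≠ 0 := by
      intro h
      rw [h] at h1
      have := h1
      simp [Fin.le_def] at this
    obtain ⟨i', rfl⟩ := Fin.eq_succ_of_ne_zero hi0
    rw [Fin.cons_succ] at h2 h3
    exact ⟨i', Fin.succ_le_succ_iff.1 h1, h2, h3⟩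
  · rintro ⟨i, h1, h2, h3⟩
    exact ⟨i.succ, Fin.succ_le_succ_iff.2 h1,
      by rw [Fin.cons_succ]; exact h2, by rw [Fin.cons_succ]; exact h3⟩

lemma Mdel_cons_zero {L : ℕ} (a : Fin m × Bool) (g : Fin L → Fin m × Bool) :
    Mdel lab (Fin.cons a g) 0 = Mch lab g := by
  rw [Mdel, Mch]
  have h2 : (Finset.univ : Finset (Fin (L+1))).erase 0
      = Finset.univ.map ⟨Fin.succ, Fin.succ_injective L⟩ := by
    ext x
    simp only [Finset.mem_erase, Finset.mem_univ, and_true, Finset.mem_map,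
      Function.Embedding.coeFn_mk, true_and]
    constructor
    · intro hx
      obtain ⟨x', rfl⟩ := Fin.eq_succ_of_ne_zero hx
      exact ⟨x', rfl⟩
    · rintro ⟨x', rfl⟩
      exact Fin.succ_ne_zero x'
  rw [h2, Finset.map_val, Multiset.map_map]
  refine Multiset.map_congr rfl ?_
  intro q _
  simp only [Function.comp, Function.Embedding.coeFn_mk]
  rw [lb, lb, SS_cons, SS_cons]

lemma goodT_congr_fst {L : ℕ} {f f' : Fin L → Fin m × Bool}
    (h : ∀ i, (f i).1 = (f' i).1) : GoodT f ↔ GoodT f' := by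
  have hfun : (fun i => (f i).1) = (fun i => (f' i).1) := funext h
  constructor
  · rintro ⟨h1, h2⟩
    exact ⟨hfun ▸ h1, fun i => (h i) ▸ h2 i⟩
  · rintro ⟨h1, h2⟩
    exact ⟨hfun ▸ h1, fun i => (h i) ▸ h2 i⟩

lemma cons_fst_inj {L : ℕ} {v : Fin m} {s : Bool} {g : Fin L → Fin m × Bool}
    (hg : Function.Injective fun i => (g i).1) (hv : ∀ i, (g i).1 ≠ v) :
    Function.Injective (fun i => ((Fin.cons (α := fun _ => Fin m × Bool) (v, s) g) i).1) := by
  intro i j hij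
  simp only at hij
  cases i using Fin.cases with
  | zero => cases j using Fin.cases with
    | zero => rfl
    | succ j' =>
        rw [Fin.cons_zero, Fin.cons_succ] at hij
        exact absurd hij.symm (hv j')
  | succ i' => cases j using Fin.cases with
    | zero =>
        rw [Fin.cons_zero, Fin.cons_succ] at hij
        exact absurd hij (hv i')
    | succ j' =>
        rw [Fin.cons_succ, Fin.cons_succ] at hij
        rw [hg hij]

lemma sum_head {L : ℕ} (hLm : L + 1 ≤ m) (g : Fin L → Fin m × Bool) :
    (∑ a : Fin m × Bool, ind (GoodT (Fin.cons a g) ∧ PosT (Fin.cons a g)))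
      = ind (GoodT g) := by
  have hLm' : L ≤ m := by omega
  set v₀ : Fin m := ⟨L, by omega⟩ with hv₀
  have htail : ∀ a : Fin m × Bool, GoodT (Fin.cons a g) →
      (Function.Injective fun i => (g i).1) ∧ (∀ i, ((g i).1 : ℕ) < L + 1)
        ∧ (∀ i, (g i).1 ≠ a.1) := by
    rintro a ⟨h1, h2⟩
    refine ⟨?_, ?_, ?_⟩
    · intro i j hij
      have h3 : ((Fin.cons (α := fun _ => Fin m × Bool) a g) i.succ).1
          = ((Fin.cons (α := fun _ => Fin m × Bool) a g) j.succ).1 := by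
        rw [Fin.cons_succ, Fin.cons_succ]; exact hij
      exact Fin.succ_injective _ (h1 h3)
    · intro i
      have := h2 i.succ
      rwa [Fin.cons_succ] at this
    · intro i hi
      have h3 : ((Fin.cons (α := fun _ => Fin m × Bool) a g) i.succ).1
          = ((Fin.cons (α := fun _ => Fin m × Bool) a g) 0).1 := by
        rw [Fin.cons_succ, Fin.cons_zero]; exact hi
      exact Fin.succ_ne_zero i (h1 h3)
  have hfst2 : ∀ (v : Fin m) (s₁ s₂ : Bool) (i : Fin (L+1)),
      ((Fin.cons (α := fun _ => Fin m × Bool) (v, s₁) g) i).1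
        = ((Fin.cons (α := fun _ => Fin m × Bool) (v, s₂) g) i).1 := by
    intro v s₁ s₂ i
    cases i using Fin.cases with
    | zero => rw [Fin.cons_zero, Fin.cons_zero]
    | succ i' => rw [Fin.cons_succ, Fin.cons_succ]
  by_cases hg : GoodT g
  · rw [ind_of hg]
    have hval : ∀ a : Fin m × Bool,
        (GoodT (Fin.cons a g) ∧ PosT (Fin.cons a g)) ↔ a = (v₀, true) := by
      intro a
      constructor
      · rintro ⟨hGa, hPa⟩
        obtain ⟨hi1, hi2, hi3⟩ := htail a hGa
        have hv : (a.1 : ℕ) = L := by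
          have hlt : (a.1 : ℕ) < L + 1 := by
            have := hGa.2 0
            rwa [Fin.cons_zero] at this
          by_contra hne
          have hlt' : ((a.1 : Fin m) : ℕ) < L := by omega
          obtain ⟨i, hi⟩ := exists_letter hLm' hg hlt'
          exact hi3 i hi
        have hs : a.2 = true := by
          have := hPa 0
          rw [Fin.cons_zero] at this
          exact this (by simpa using hv)
        rcases a with ⟨a1, a2⟩
        simp only [Prod.mk.injEq]
        constructor
        · ext
          simpa using hv
        · exact hs
      · rintro rfl
        refine ⟨⟨?_, ?_⟩, ?_⟩
        · apply cons_fst_inj hg.1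
          intro i hi
          have h5 := hg.2 i
          rw [hi] at h5
          simp [hv₀] at h5
        · intro i
          cases i using Fin.cases with
          | zero =>
              rw [Fin.cons_zero]
              simp [hv₀]
          | succ i' =>
              rw [Fin.cons_succ]
              have := hg.2 i'
              omega
        · intro i hi
          cases i using Fin.cases with
          | zero => rw [Fin.cons_zero]
          | succ i' =>
              rw [Fin.cons_succ] at hi
              have := hg.2 i'
              omega
    rw [Finset.sum_congr rfl (fun a _ => ind_congr (hval a))]
    rw [Fintype.sum_eq_single ((v₀, true) : Fin m × Bool)
      (fun b hb => ind_of_not hb)]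
    exact ind_of rfl
  · rw [ind_of_not hg]
    have hindep : ∀ (v : Fin m) (s : Bool),
        (GoodT (Fin.cons (v, s) g) ∧ PosT (Fin.cons (v, s) g))
          → (GoodT (Fin.cons (v, !s) g) ∧ PosT (Fin.cons (v, !s) g)) := by
      rintro v s ⟨hGa, hPa⟩
      obtain ⟨hi1, hi2, hi3⟩ := htail (v, s) hGa
      have hex : ∃ i₀, ((g i₀).1 : ℕ) = L := by
        by_contra hNo
        push_neg at hNo
        refine hg ⟨hi1, fun i => ?_⟩
        have := hi2 i
        have := hNo i
        omega
      obtain ⟨i₀, hi₀⟩ := hex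
      have hvL : (v : ℕ) ≠ L := by
        intro hvl
        refine hi3 i₀ ?_
        show (g i₀).1 = v
        ext
        rw [hi₀, hvl]
      constructor
      · exact (goodT_congr_fst (hfst2 v s (!s))).1 hGa
      · intro i hi
        cases i using Fin.cases with
        | zero =>
            rw [Fin.cons_zero] at hi
            simp only at hi
            exact absurd (by simpa using hi) hvL
        | succ i' =>
            rw [Fin.cons_succ] at hi ⊢
            have := hPa i'.succ (by rw [Fin.cons_succ]; exact hi)
            rwa [Fin.cons_succ] at this
    have hiff : ∀ (v : Fin m),
        (GoodT (Fin.cons (v, true) g) ∧ PosT (Fin.cons (v, true) g))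
          ↔ (GoodT (Fin.cons (v, false) g) ∧ PosT (Fin.cons (v, false) g)) := by
      intro v
      constructor
      · intro h
        have := hindep v true h
        simpa using this
      · intro h
        have := hindep v false h
        simpa using this
    rw [Fintype.sum_prod_type]
    refine Finset.sum_eq_zero ?_
    intro v _
    rw [Fintype.sum_bool]
    rw [ind_congr (hiff v)]
    exact zmod2_add_self _

lemma step_boundary {L : ℕ} (hLm : L + 1 ≤ m) :
    (∑ f : Fin (L+1) → Fin m × Bool,
        ind (GoodT f ∧ PosT f) * ind (AltM true (Mdel lab f 0)))
      = beta lab L := by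
  rw [beta]
  have hre := Fintype.sum_equiv (Fin.consEquiv (fun _ : Fin (L+1) => Fin m × Bool))
    (fun p : (Fin m × Bool) × (Fin L → Fin m × Bool) =>
      ind (GoodT (Fin.cons p.1 p.2) ∧ PosT (Fin.cons p.1 p.2))
        * ind (AltM true (Mdel lab (Fin.cons p.1 p.2) 0)))
    (fun f => ind (GoodT f ∧ PosT f) * ind (AltM true (Mdel lab f 0)))
    (fun p => rfl)
  rw [← hre, Fintype.sum_prod_type, Finset.sum_comm]
  refine Finset.sum_congr rfl ?_
  intro g _
  have h1 : ∀ a : Fin m × Bool,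
      ind (GoodT (Fin.cons a g) ∧ PosT (Fin.cons a g))
          * ind (AltM true (Mdel lab (Fin.cons a g) 0))
      = ind (GoodT (Fin.cons a g) ∧ PosT (Fin.cons a g))
          * ind (AltM true (Mch lab g)) := by
    intro a
    rw [Mdel_cons_zero]
  rw [Finset.sum_congr rfl (fun a _ => h1 a), ← Finset.sum_mul, sum_head hLm g]

lemma beta_succ (H : LabHyp m N lab) {L : ℕ} (hLm : L + 1 ≤ m) :
    beta lab (L+1) = beta lab L := by
  rw [step_I H hLm]
  have h1 : ∀ f : Fin (L+1) → Fin m × Bool,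
      ind (GoodT f ∧ PosT f) * (ind (AltM true (Mch lab f)) + ind (AltM false (Mch lab f)))
      = ind (GoodT f ∧ PosT f) * (∑ t : Fin (L+1), ind (AltM true (Mdel lab f t))) := by
    intro f
    by_cases hGP : GoodT f ∧ PosT f
    · rw [chain_parity H (by omega) hGP.1.1]
    · rw [ind_of_not hGP, zero_mul, zero_mul]
  rw [Finset.sum_congr rfl (fun f _ => h1 f)]
  have h2 : ∀ f : Fin (L+1) → Fin m × Bool,
      ind (GoodT f ∧ PosT f) * (∑ t : Fin (L+1), ind (AltM true (Mdel lab f t)))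
      = ind (GoodT f ∧ PosT f) * ind (AltM true (Mdel lab f 0))
        + ∑ t : Fin L, ind (GoodT f ∧ PosT f) * ind (AltM true (Mdel lab f t.succ)) := by
    intro f
    rw [Fin.sum_univ_succ, mul_add, Finset.mul_sum]
  rw [Finset.sum_congr rfl (fun f _ => h2 f), Finset.sum_add_distrib, step_swap, add_zero,
    step_boundary hLm]

lemma beta_zero : beta lab 0 = 1 := by
  rw [beta]
  have h1 : ∀ f : Fin 0 → Fin m × Bool,
      ind (GoodT f) * ind (AltM true (Mch lab f)) = 1 := by
    intro f
    have hG : GoodT f := ⟨fun i => i.elim0, fun i => i.elim0⟩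
    have hM : Mch lab f = 0 := by
      rw [Mch]
      simp
    rw [ind_of hG, hM, ind_of (altM_zero true)]
    ring
  rw [Finset.sum_congr rfl (fun f _ => h1 f), Finset.sum_const, Finset.card_univ]
  have h2 : Fintype.card (Fin 0 → Fin m × Bool) = 1 := by simp
  rw [h2, one_smul]

lemma beta_all (H : LabHyp m N lab) : ∀ L, L ≤ m → beta lab L = 1 := by
  intro L
  induction L with
  | zero => intro _; exact beta_zero
  | succ L ih =>
      intro h
      rw [beta_succ H h]
      exact ih (by omega)

theorem tucker_bound (H : LabHyp m N lab) : m ≤ N := by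
  have h1 : beta lab m = 1 := beta_all H m le_rfl
  have h2 : ∃ f : Fin m → Fin m × Bool, ind (GoodT f) * ind (AltM true (Mch lab f)) ≠ 0 := by
    by_contra h
    push_neg at h
    have h3 : beta lab m = 0 := by
      rw [beta]
      exact Finset.sum_eq_zero (fun f _ => h f)
    rw [h3] at h1
    exact one_ne_zero h1.symm
  obtain ⟨f, hf⟩ := h2
  have hG : GoodT f := by
    by_contra h
    rw [ind_of_not h, zero_mul] at hf
    exact hf rfl
  have hA : AltM true (Mch lab f) := by
    by_contra h
    rw [ind_of_not h, mul_zero] at hf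
    exact hf rfl
  obtain ⟨l, hl, hMl⟩ := hA
  have hlen : l.length = m := by
    have hc := Mch_card (lab := lab) f
    rw [hMl] at hc
    simpa using hc
  have hmem : ∀ x ∈ l, 1 ≤ x.natAbs ∧ x.natAbs ≤ N := by
    intro x hx
    have hxM : x ∈ Mch lab f := by rw [hMl]; simpa using hx
    have hx0 : x ≠ 0 := by
      intro h
      exact chain_no_opp H hG.1 x hxM x hxM (by rw [h]; ring)
    rw [Mch, Multiset.mem_map] at hxM
    obtain ⟨q, _, rfl⟩ := hxM
    have hb := H.bound (SS f q true) (SS f q false) (SS_disjoint hG.1 q) (SS_union_nonempty f q)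
    rw [lb] at hx0 ⊢
    rw [Int.abs_eq_natAbs] at hb
    constructor
    · omega
    · exact_mod_cast hb
  have hpair := altL_abs_pairwise hl
  have hnd : (l.map Int.natAbs).Nodup := by
    have hp2 : (l.map Int.natAbs).Pairwise (· < ·) := by
      rw [List.pairwise_map]
      refine hpair.imp ?_
      intro a b hab
      rw [Int.abs_eq_natAbs, Int.abs_eq_natAbs] at hab
      exact_mod_cast hab
    exact hp2.imp (fun h => Nat.ne_of_lt h)
  have hsub : (l.map Int.natAbs).toFinset ⊆ Finset.Icc 1 N := by
    intro x hx
    rw [List.mem_toFinset, List.mem_map] at hx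
    obtain ⟨y, hy, rfl⟩ := hx
    rw [Finset.mem_Icc]
    exact hmem y hy
  have hcard : (l.map Int.natAbs).toFinset.card = m := by
    rw [List.toFinset_card_of_nodup hnd, List.length_map, hlen]
  have hfin := Finset.card_le_card hsub
  rw [hcard, Nat.card_Icc] at hfin
  omega

end Machinery4

section KneserSection

open scoped Classical

variable {m r k : ℕ}

def sgnSet (A B : Finset (Fin m)) : Prop :=
  ∃ hne : (A ∪ B).Nonempty, (A ∪ B).min' hne ∈ A

noncomputable def canon (r : ℕ) (W : Finset (Fin m)) : Finset (Fin m) :=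
  if h : r ≤ W.card then (Finset.exists_subset_card_eq h).choose else ∅

lemma canon_spec {W : Finset (Fin m)} (h : r ≤ W.card) :
    canon r W ⊆ W ∧ (canon r W).card = r := by
  rw [canon, dif_pos h]
  exact ⟨(Finset.exists_subset_card_eq h).choose_spec.1,
    (Finset.exists_subset_card_eq h).choose_spec.2⟩

def bigSide (A B : Finset (Fin m)) : Prop :=
  B.card < A.card ∨ (A.card = B.card ∧ sgnSet A B)

noncomputable def klab (r k : ℕ) (c : Finset (Fin m) → Fin k)
    (A B : Finset (Fin m)) : ℤ :=
  if A.card + B.card ≤ 2*r - 2 then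
    (if sgnSet A B then ((A.card + B.card : ℕ) : ℤ) else -((A.card + B.card : ℕ) : ℤ))
  else
    (if bigSide A B then ((2*r - 1 + (c (canon r A)).val : ℕ) : ℤ)
     else -((2*r - 1 + (c (canon r B)).val : ℕ) : ℤ))

lemma min'_union_comm {A B : Finset (Fin m)} (hne' : (B ∪ A).Nonempty)
    (hne2 : (A ∪ B).Nonempty) : (B ∪ A).min' hne' = (A ∪ B).min' hne2 := by
  have hU : B ∪ A = A ∪ B := Finset.union_comm B A
  refine le_antisymm ?_ ?_
  · exact Finset.min'_le _ _ (by rw [hU]; exact Finset.min'_mem _ _)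
  · exact Finset.min'_le _ _ (by rw [← hU]; exact Finset.min'_mem _ _)

lemma sgnSet_swap {A B : Finset (Fin m)} (hd : Disjoint A B) (hne : (A ∪ B).Nonempty) :
    sgnSet B A ↔ ¬ sgnSet A B := by
  have hU : B ∪ A = A ∪ B := Finset.union_comm B A
  have hmem := Finset.min'_mem (A ∪ B) hne
  rw [Finset.mem_union] at hmem
  constructor
  · rintro ⟨hne', hmin⟩ ⟨hne2, hmin2⟩
    rw [min'_union_comm hne' hne2] at hmin
    exact Finset.disjoint_left.1 hd hmin2 hmin
  · intro hns
    have hne' : (B ∪ A).Nonempty := by rw [hU]; exact hne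
    refine ⟨hne', ?_⟩
    rw [min'_union_comm hne' hne]
    rcases hmem with h | h
    · exact absurd ⟨hne, h⟩ hns
    · exact h

lemma bigSide_swap {A B : Finset (Fin m)} (hd : Disjoint A B) (hne : (A ∪ B).Nonempty) :
    bigSide B A ↔ ¬ bigSide A B := by
  rw [bigSide, bigSide, sgnSet_swap hd hne]
  rcases Nat.lt_trichotomy A.card B.card with h | h | h
  · constructor
    · intro _ hcon
      rcases hcon with h2 | h2
      · omega
      · omega
    · intro _
      exact Or.inl h
  · constructor
    · rintro (h2 | ⟨h2, h3⟩) hcon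
      · omega
      · rcases hcon with h4 | ⟨h4, h5⟩
        · omega
        · exact h3 h5
    · intro hcon
      by_cases h5 : sgnSet A B
      · exact absurd (Or.inr ⟨h, h5⟩) hcon
      · exact Or.inr ⟨h.symm, h5⟩
  · constructor
    · intro h2 _
      rcases h2 with h2 | h2
      · omega
      · omega
    · intro hcon
      exfalso
      exact hcon (Or.inl h)

lemma klab_anti (c : Finset (Fin m) → Fin k) {A B : Finset (Fin m)}
    (hd : Disjoint A B) (hne : (A ∪ B).Nonempty) :
    klab r k c B A = - klab r k c A B := by
  rw [klab, klab]
  have hcards : B.card + A.card = A.card + B.card := by ring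
  rw [hcards]
  by_cases hsmall : A.card + B.card ≤ 2*r - 2
  · rw [if_pos hsmall, if_pos hsmall]
    by_cases hs : sgnSet A B
    · rw [if_pos hs, if_neg (fun h => (sgnSet_swap hd hne).1 h hs)]
    · rw [if_pos ((sgnSet_swap hd hne).2 hs), if_neg hs]
      ring
  · rw [if_neg hsmall, if_neg hsmall]
    by_cases hb : bigSide A B
    · rw [if_pos hb, if_neg (fun h => ((bigSide_swap hd hne).1 h) hb)]
    · rw [if_pos ((bigSide_swap hd hne).2 hb), if_neg hb]
      ring

lemma klab_bound (c : Finset (Fin m) → Fin k) (hr : 1 ≤ r) {A B : Finset (Fin m)} :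
    |klab r k c A B| ≤ ((2*r - 2 + k : ℕ) : ℤ) := by
  rw [klab]
  by_cases hsmall : A.card + B.card ≤ 2*r - 2
  · rw [if_pos hsmall]
    by_cases hs : sgnSet A B
    · rw [if_pos hs, abs_of_nonneg (by positivity)]
      exact_mod_cast by omega
    · rw [if_neg hs, abs_neg, abs_of_nonneg (by positivity)]
      exact_mod_cast by omega
  · rw [if_neg hsmall]
    have hc : ∀ W : Finset (Fin m), 2*r - 1 + (c (canon r W)).val ≤ 2*r - 2 + k := by
      intro W
      have := (c (canon r W)).2
      omega
    by_cases hb : bigSide A B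
    · rw [if_pos hb, abs_of_nonneg (by positivity)]
      exact_mod_cast hc A
    · rw [if_neg hb, abs_neg, abs_of_nonneg (by positivity)]
      exact_mod_cast hc B

lemma big_card {A B : Finset (Fin m)} (hr : 1 ≤ r)
    (h : ¬ (A.card + B.card ≤ 2*r - 2)) (hbig : bigSide A B) : r ≤ A.card := by
  rcases hbig with h2 | ⟨h2, _⟩ <;> omega

end KneserSection

section KneserSection2

open scoped Classical

variable {m r k : ℕ}

lemma klab_nocomp (hr : 1 ≤ r) (c : Finset (Fin m) → Fin k)
    (hcon : ∀ S T : Finset (Fin m), S.card = r → T.card = r → Disjoint S T → c S ≠ c T) :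
    ∀ A B A' B' : Finset (Fin m), Disjoint A B → (A ∪ B).Nonempty →
      Disjoint A' B' → (A' ∪ B').Nonempty → A ⊆ A' → B ⊆ B' →
      klab r k c A' B' + klab r k c A B ≠ 0 := by
  intro A B A' B' hd hne hd' hne' hAA hBB hsum
  have hpos : 1 ≤ A.card + B.card := by
    have h1 := Finset.card_union_le A B
    have h2 := Finset.card_pos.2 hne
    omega
  have hpos' : 1 ≤ A'.card + B'.card := by
    have h1 := Finset.card_union_le A' B'
    have h2 := Finset.card_pos.2 hne'
    omega
  rw [klab, klab] at hsum
  by_cases hS : A.card + B.card ≤ 2*r - 2 <;>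
    by_cases hS' : A'.card + B'.card ≤ 2*r - 2
  · -- both small
    rw [if_pos hS, if_pos hS'] at hsum
    by_cases hs : sgnSet A B <;> by_cases hs' : sgnSet A' B'
    · rw [if_pos hs, if_pos hs'] at hsum
      push_cast at hsum
      omega
    · rw [if_pos hs, if_neg hs'] at hsum
      have hcc : A.card + B.card = A'.card + B'.card := by
        push_cast at hsum
        omega
      have hA : A = A' := Finset.eq_of_subset_of_card_le hAA
        (by have := Finset.card_le_card hAA; have := Finset.card_le_card hBB; omega)
      have hB : B = B' := Finset.eq_of_subset_of_card_le hBB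
        (by have := Finset.card_le_card hAA; have := Finset.card_le_card hBB; omega)
      rw [← hA, ← hB] at hs'
      exact hs' hs
    · rw [if_neg hs, if_pos hs'] at hsum
      have hcc : A.card + B.card = A'.card + B'.card := by
        push_cast at hsum
        omega
      have hA : A = A' := Finset.eq_of_subset_of_card_le hAA
        (by have := Finset.card_le_card hAA; have := Finset.card_le_card hBB; omega)
      have hB : B = B' := Finset.eq_of_subset_of_card_le hBB
        (by have := Finset.card_le_card hAA; have := Finset.card_le_card hBB; omega)
      rw [← hA, ← hB] at hs'
      exact hs hs'
    · rw [if_neg hs, if_neg hs'] at hsum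
      push_cast at hsum
      omega
  · -- AB small, A'B' big
    rw [if_pos hS, if_neg hS'] at hsum
    split_ifs at hsum <;> (push_cast at hsum; omega)
  · -- AB big, A'B' small
    rw [if_neg hS, if_pos hS'] at hsum
    split_ifs at hsum <;> (push_cast at hsum; omega)
  · -- both big
    rw [if_neg hS, if_neg hS'] at hsum
    by_cases hb : bigSide A B <;> by_cases hb' : bigSide A' B'
    · rw [if_pos hb, if_pos hb'] at hsum
      push_cast at hsum
      omega
    · rw [if_pos hb, if_neg hb'] at hsum
      -- colors equal : canon A (⊆ A ⊆ A') and canon B' (⊆ B')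
      have hcol : (c (canon r A)).val = (c (canon r B')).val := by
        push_cast at hsum
        omega
      have hrA : r ≤ A.card := big_card hr hS hb
      have hrB' : r ≤ B'.card := by
        rw [bigSide] at hb'
        push_neg at hb'
        have h1 := hb'.1
        omega
      obtain ⟨hsubA, hcardA⟩ := canon_spec (r := r) hrA
      obtain ⟨hsubB, hcardB⟩ := canon_spec (r := r) hrB'
      refine hcon (canon r A) (canon r B') hcardA hcardB ?_ ?_
      · exact Finset.disjoint_of_subset_left (hsubA.trans hAA)
          (Finset.disjoint_of_subset_right hsubB hd')
      · exact Fin.val_injective hcol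
    · rw [if_neg hb, if_pos hb'] at hsum
      have hcol : (c (canon r A')).val = (c (canon r B)).val := by
        push_cast at hsum
        omega
      have hrA' : r ≤ A'.card := big_card hr hS' hb'
      have hrB : r ≤ B.card := by
        rw [bigSide] at hb
        push_neg at hb
        have h1 := hb.1
        omega
      obtain ⟨hsubA, hcardA⟩ := canon_spec (r := r) hrA'
      obtain ⟨hsubB, hcardB⟩ := canon_spec (r := r) hrB
      refine hcon (canon r A') (canon r B) hcardA hcardB ?_ ?_
      · exact Finset.disjoint_of_subset_left hsubA
          (Finset.disjoint_of_subset_right (hsubB.trans hBB) hd')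
      · exact Fin.val_injective hcol
    · rw [if_neg hb, if_neg hb'] at hsum
      push_cast at hsum
      omega

theorem kneser_thm (hr : 1 ≤ r) (hm : 2*r + k ≤ m + 1)
    (c : Finset (Fin m) → Fin k) :
    ∃ S T : Finset (Fin m), S.card = r ∧ T.card = r ∧ Disjoint S T ∧ c S = c T := by
  by_contra hcon
  push_neg at hcon
  have H : LabHyp m (2*r - 2 + k) (klab r k c) :=
    ⟨fun A B hd hne => klab_anti c hd hne,
     fun A B A' B' hd hne hd' hne' hAA hBB =>
       klab_nocomp hr c (fun S T h1 h2 h3 => hcon S T h1 h2 h3) A B A' B' hd hne hd' hne' hAA hBB,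
     fun A B _ _ => klab_bound c hr⟩
  have := tucker_bound H
  omega

end KneserSection2

end Stmt3Aux

open Stmt3Aux in
theorem stmt3 (n k : ℕ) (hkn : k < n) (g : (Fin n → Bool) → ZMod 2)
    (A : Fin k → Set ((Fin n → Bool) → ZMod 2))
    (hcover : ∀ x : (Fin n → Bool) → ZMod 2, ∃ j, x ∈ A j) :
    ∃ j : Fin k, ∃ a ∈ A j, ∃ b ∈ A j, a ≠ b ∧
      (Finset.univ.filter (fun τ : Fin n → Bool => (a - b - g) τ ≠ 0)).card ≤ 3 * k + 3 := by
  classical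
  rcases Nat.eq_zero_or_pos k with hk0 | hk
  · obtain ⟨j, _⟩ := hcover 0
    exact absurd j.2 (by omega)
  set D : Finset (Fin n → Bool) := Finset.univ.filter (fun τ => g τ ≠ 0) with hD
  set M := D.card with hM
  by_cases hsmall : M ≤ 3*k + 1
  · -- pigeonhole case
    set τm : Fin k → (Fin n → Bool) := fun i => fun j => decide ((j : ℕ) = (i : ℕ)) with hτm
    have hτinj : Function.Injective τm := by
      intro i i' h
      apply Fin.ext
      have h2 : decide ((i:ℕ) = (i:ℕ)) = decide ((i:ℕ) = (i':ℕ)) :=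
        congrFun h ⟨(i : ℕ), by omega⟩
      rw [decide_eq_decide] at h2
      exact h2.mp rfl
    set δ : (Fin n → Bool) → ((Fin n → Bool) → ZMod 2) :=
      fun τ => fun σ => if σ = τ then 1 else 0 with hδ
    have hδne : ∀ τ, δ τ ≠ 0 := by
      intro τ h
      have := congrFun h τ
      simp [hδ] at this
    have hδinj : Function.Injective δ := by
      intro τ τ' h
      have := congrFun h τ
      simp only [hδ, if_pos rfl] at this
      by_contra hne
      rw [if_neg (fun hh => hne hh)] at this
      exact one_ne_zero this
    set x : Fin (k+1) → ((Fin n → Bool) → ZMod 2) :=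
      fun i => Fin.cases 0 (fun i' => δ (τm i')) i with hx
    have hxinj : Function.Injective x := by
      intro i i' h
      simp only [hx] at h
      cases i using Fin.cases with
      | zero => cases i' using Fin.cases with
        | zero => rfl
        | succ j' =>
            rw [Fin.cases_zero, Fin.cases_succ] at h
            exact absurd h.symm (hδne _)
      | succ j => cases i' using Fin.cases with
        | zero =>
            rw [Fin.cases_zero, Fin.cases_succ] at h
            exact absurd h (hδne _)
        | succ j' =>
            rw [Fin.cases_succ, Fin.cases_succ] at h
            rw [hτinj (hδinj h)]
    have hxsupp : ∀ i, (Finset.univ.filter (fun σ => x i σ ≠ 0)).card ≤ 1 := by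
      intro i
      cases i using Fin.cases with
      | zero =>
          have : (Finset.univ.filter (fun σ => x 0 σ ≠ 0)) = ∅ := by
            refine Finset.filter_eq_empty_iff.2 ?_
            intro σ _
            simp [hx]
          rw [this]
          simp
      | succ j =>
          have hsub : (Finset.univ.filter (fun σ => x j.succ σ ≠ 0)) ⊆ {τm j} := by
            intro σ hσ
            rw [Finset.mem_filter] at hσ
            rw [Finset.mem_singleton]
            by_contra hne
            refine hσ.2 ?_
            simp only [hx, Fin.cases_succ, hδ]
            rw [if_neg hne]
          calc _ ≤ ({τm j} : Finset (Fin n → Bool)).card := Finset.card_le_card hsub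
            _ = 1 := Finset.card_singleton _
    set φ : Fin (k+1) → Fin k := fun i => (hcover (x i)).choose with hφ
    obtain ⟨i, i', hne, heq⟩ := Fintype.exists_ne_map_eq_of_card_lt φ (by simp)
    refine ⟨φ i, x i, (hcover (x i)).choose_spec, x i', ?_, fun h => hne (hxinj h), ?_⟩
    · rw [heq]
      exact (hcover (x i')).choose_spec
    · have hsub : (Finset.univ.filter (fun τ => (x i - x i' - g) τ ≠ 0))
          ⊆ (Finset.univ.filter (fun σ => x i σ ≠ 0))
            ∪ (Finset.univ.filter (fun σ => x i' σ ≠ 0)) ∪ D := by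
        intro τ hτ
        rw [Finset.mem_filter] at hτ
        rw [Finset.mem_union, Finset.mem_union]
        by_contra hcon
        push_neg at hcon
        obtain ⟨⟨h1, h2⟩, h3⟩ := hcon
        rw [Finset.mem_filter] at h1 h2
        rw [hD, Finset.mem_filter] at h3
        have e1 : x i τ = 0 := by
          by_contra he
          exact h1 ⟨Finset.mem_univ _, he⟩
        have e2 : x i' τ = 0 := by
          by_contra he
          exact h2 ⟨Finset.mem_univ _, he⟩
        have e3 : g τ = 0 := by
          by_contra he
          exact h3 ⟨Finset.mem_univ _, he⟩
        refine hτ.2 ?_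
        simp [Pi.sub_apply, e1, e2, e3]
      calc (Finset.univ.filter (fun τ => (x i - x i' - g) τ ≠ 0)).card
          ≤ _ := Finset.card_le_card hsub
        _ ≤ ((Finset.univ.filter (fun σ => x i σ ≠ 0))
              ∪ (Finset.univ.filter (fun σ => x i' σ ≠ 0))).card + D.card :=
            Finset.card_union_le _ _
        _ ≤ ((Finset.univ.filter (fun σ => x i σ ≠ 0)).card
              + (Finset.univ.filter (fun σ => x i' σ ≠ 0)).card) + D.card := by
            have := Finset.card_union_le (Finset.univ.filter (fun σ => x i σ ≠ 0))
              (Finset.univ.filter (fun σ => x i' σ ≠ 0))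
            omega
        _ ≤ 3 * k + 3 := by
            have h1 := hxsupp i
            have h2 := hxsupp i'
            omega
  · -- Kneser case
    push_neg at hsmall
    have hM2 : 3*k + 2 ≤ M := hsmall
    set r : ℕ := (M - k + 1) / 2 with hr
    have hr1 : 1 ≤ r := by omega
    have hrm : 2*r + k ≤ M + 1 := by omega
    have hM2r : M - 2*r ≤ k := by omega
    have h2rM : 2*r ≤ M := by omega
    set e : Fin M ≃ {τ // τ ∈ D} := D.equivFin.symm with he
    set em : Fin M → (Fin n → Bool) := fun i => (e i : Fin n → Bool) with hem
    have heminj : Function.Injective em := by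
      intro i j h
      have : (e i : {x // x ∈ D}) = e j := Subtype.ext h
      exact e.injective this
    have hemD : ∀ i, em i ∈ D := fun i => (e i).2
    set p : Finset (Fin M) → ((Fin n → Bool) → ZMod 2) :=
      fun S => fun τ => if τ ∈ S.image em then g τ else 0 with hp
    set c : Finset (Fin M) → Fin k := fun S => (hcover (p S)).choose with hc
    obtain ⟨S, T, hScard, hTcard, hST, hcST⟩ := kneser_thm hr1 hrm c
    have hSimg : S.image em ⊆ D := by
      intro τ hτ
      rw [Finset.mem_image] at hτ
      obtain ⟨s, _, rfl⟩ := hτ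
      exact hemD s
    have hTimg : T.image em ⊆ D := by
      intro τ hτ
      rw [Finset.mem_image] at hτ
      obtain ⟨t, _, rfl⟩ := hτ
      exact hemD t
    have himgdisj : Disjoint (S.image em) (T.image em) := by
      rw [Finset.disjoint_left]
      intro τ hτS hτT
      rw [Finset.mem_image] at hτS hτT
      obtain ⟨s, hs, rfl⟩ := hτS
      obtain ⟨t, ht, hts⟩ := hτT
      rw [heminj hts] at ht
      exact Finset.disjoint_left.1 hST hs ht
    have hane : p S ≠ p T := by
      intro h
      obtain ⟨s₀, hs₀⟩ := Finset.card_pos.1 (by omega : 0 < S.card)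
      have h1 : p S (em s₀) = g (em s₀) := by
        rw [hp]
        simp only
        rw [if_pos (Finset.mem_image.2 ⟨s₀, hs₀, rfl⟩)]
      have h2 : p T (em s₀) = 0 := by
        rw [hp]
        simp only
        rw [if_neg (fun hmem => Finset.disjoint_left.1 himgdisj
          (Finset.mem_image.2 ⟨s₀, hs₀, rfl⟩) hmem)]
      have h3 : g (em s₀) ≠ 0 := by
        have := hemD s₀
        rw [hD, Finset.mem_filter] at this
        exact this.2
      rw [h, h2] at h1
      exact h3 h1.symm
    refine ⟨c S, p S, (hcover (p S)).choose_spec, p T, ?_, hane, ?_⟩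
    · rw [hcST]
      exact (hcover (p T)).choose_spec
    · have hsub : (Finset.univ.filter (fun τ => (p S - p T - g) τ ≠ 0))
          ⊆ D \ (S.image em ∪ T.image em) := by
        intro τ hτ
        rw [Finset.mem_filter] at hτ
        have hval := hτ.2
        rw [Finset.mem_sdiff]
        by_cases hτS : τ ∈ S.image em
        · exfalso
          refine hval ?_
          have hτT : τ ∉ T.image em := fun h => Finset.disjoint_left.1 himgdisj hτS h
          simp only [Pi.sub_apply, hp]
          rw [if_pos hτS, if_neg hτT]
          ring
        · by_cases hτT : τ ∈ T.image em
          · exfalso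
            refine hval ?_
            simp only [Pi.sub_apply, hp]
            rw [if_neg hτS, if_pos hτT]
            have hg2 : g τ + g τ = 0 := zmod2_add_self _
            linear_combination -hg2
          · constructor
            · rw [hD, Finset.mem_filter]
              refine ⟨Finset.mem_univ _, ?_⟩
              intro hg0
              refine hval ?_
              simp only [Pi.sub_apply, hp]
              rw [if_neg hτS, if_neg hτT, hg0]
              ring
            · rw [Finset.mem_union]
              rintro (h | h)
              · exact hτS h
              · exact hτT h
      have hcard : (D \ (S.image em ∪ T.image em)).card = M - 2*r := by
        rw [Finset.card_sdiff_of_subset]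
        · rw [Finset.card_union_of_disjoint himgdisj,
            Finset.card_image_of_injective _ heminj,
            Finset.card_image_of_injective _ heminj, hScard, hTcard]
          rw [hM]
          ring_nf
        · intro τ hτ
          rw [Finset.mem_union] at hτ
          rcases hτ with h | h
          · exact hSimg h
          · exact hTimg h
      calc (Finset.univ.filter (fun τ => (p S - p T - g) τ ≠ 0)).card
          ≤ (D \ (S.image em ∪ T.image em)).card := Finset.card_le_card hsub
        _ = M - 2*r := hcard
        _ ≤ 3 * k + 3 := by omega
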